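/- Let C ⊆ V and r > 0. Let B be a minimum-cardinality subset of C satisfying C ⊆ ∪_{b∈B} B(b,r), and suppose |B| ≥ 2. Let IG be the graph with vertex set B having an edge between distinct b, b' ∈ B whenever d(b,b') ≤ 3r, and suppose IG is connected and has maximum degree at most Δ. Then there exists a set B' ⊆ B with |B'| ≤ (Δ/(Δ+1))·|B| such that C ⊆ ∪_{b∈B'} B(b, 8r); in particular, the minimum cardinality of a subset B'' ⊆ C with C ⊆ ∪_{b∈B''} B(b,8r) is at most (Δ/(Δ+1))·|B|. -/
import Mathlib


open SimpleGraph

/-- The length (total weight) of a walk under an edge-weight function `w`. -/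
noncomputable def wlen {V : Type*} {G : SimpleGraph V} (w : Sym2 V → ℝ) {u v : V}
    (p : G.Walk u v) : ℝ :=
  (p.edges.map w).sum

/-- `p` is a subwalk (subpath) of `q`. -/
def IsSubwalk {V : Type*} {G : SimpleGraph V} {u v a b : V}
    (p : G.Walk u v) (q : G.Walk a b) : Prop :=
  ∃ (q1 : G.Walk a u) (q2 : G.Walk v b), q = (q1.append p).append q2

/-- Shortest-path distance as the infimum of walk lengths. -/
noncomputable def wdist {V : Type*} (G : SimpleGraph V) (w : Sym2 V → ℝ) (u v : V) : ℝ :=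
  sInf {x : ℝ | ∃ p : G.Walk u v, x = wlen w p}

/-- A finite connected positively-weighted graph (all weights at least 1) with
unique shortest paths, in which every edge is the unique shortest path between
its endpoints.  `sp u v` is the unique shortest path from `u` to `v`. -/
structure Setting (V : Type) [Fintype V] where
  G : SimpleGraph V
  w : Sym2 V → ℝ
  connected : G.Connected
  one_le_w : ∀ e ∈ G.edgeSet, 1 ≤ w e
  sp : ∀ u v : V, G.Walk u v
  sp_isPath : ∀ u v : V, (sp u v).IsPath
  sp_shortest : ∀ (u v : V) (q : G.Walk u v), wlen w (sp u v) ≤ wlen w q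
  sp_unique : ∀ (u v : V) (q : G.Walk u v), q.IsPath →
    wlen w q = wlen w (sp u v) → q = sp u v
  edge_sp : ∀ (u v : V) (h : G.Adj u v),
    sp u v = SimpleGraph.Walk.cons h SimpleGraph.Walk.nil

namespace Setting

variable {V : Type} [Fintype V]

/-- Shortest-path distance `d(u,v)`. -/
noncomputable def d (S : Setting V) (u v : V) : ℝ := wlen S.w (S.sp u v)

/-- The ball `B(v,r)`. -/
def ball (S : Setting V) (v : V) (r : ℝ) : Set V := {u : V | S.d v u ≤ r}

/-- `maxedge(p(u,v)) ≤ r`: every edge of the shortest path has weight at most `r`. -/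
def maxedgeLE (S : Setting V) (u v : V) (r : ℝ) : Prop :=
  ∀ e ∈ (S.sp u v).edges, S.w e ≤ r

/-- An `(r,k)` vertex cover. -/
def IsVertexCover (S : Setting V) (r : ℝ) (k : ℕ) (C : Set V) : Prop :=
  (∀ v1 v2 : V, r < S.d v1 v2 → S.maxedgeLE v1 v2 r →
      ∃ c ∈ C, c ∈ (S.sp v1 v2).support) ∧
  (∀ v : V, (S.ball v (2 * r) ∩ C).ncard ≤ k)

/-- Discrete highway dimension at most `h`. -/
def DiscreteHDLE (S : Setting V) (h : ℕ) : Prop :=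
  ∀ (v : V) (r : ℝ), 0 < r →
    ∃ C : Set V, C.ncard ≤ h ∧
      ∀ v1 v2 : V, (∀ x ∈ (S.sp v1 v2).support, x ∈ S.ball v (4 * r)) →
        r < S.d v1 v2 → ∃ c ∈ C, c ∈ (S.sp v1 v2).support

/-- The (unique) shortest path from `v1` to `v2` is `r`-significant:
it has an `r`-witness. -/
def RSignificant (S : Setting V) (r : ℝ) (v1 v2 : V) : Prop :=
  ∃ a b : V, (a = v1 ∨ S.G.Adj a v1) ∧ (b = v2 ∨ S.G.Adj b v2) ∧
    r ≤ S.d a b ∧ IsSubwalk (S.sp v1 v2) (S.sp a b)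

/-- The shortest path from `v1` to `v2` is `(r,2r)`-close to `v`,
i.e. it belongs to `S(v,r)`. -/
def InSvr (S : Setting V) (v : V) (r : ℝ) (v1 v2 : V) : Prop :=
  ∃ a b : V, (a = v1 ∨ S.G.Adj a v1) ∧ (b = v2 ∨ S.G.Adj b v2) ∧
    r ≤ S.d a b ∧ IsSubwalk (S.sp v1 v2) (S.sp a b) ∧
    ∃ x ∈ (S.sp a b).support, S.d v x ≤ 2 * r

/-- Highway dimension at most `h`. -/
def HighwayDimLE (S : Setting V) (h : ℕ) : Prop :=
  ∀ (r : ℝ), 0 < r → ∀ v : V,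
    ∃ C : Set V, C.ncard ≤ h ∧
      ∀ v1 v2 : V, S.InSvr v r v1 v2 → ∃ c ∈ C, c ∈ (S.sp v1 v2).support

/-- An `(r,h')`-SPHS. -/
def IsSPHS (S : Setting V) (r : ℝ) (h' : ℕ) (C : Set V) : Prop :=
  (∀ v1 v2 : V, S.RSignificant r v1 v2 → ∃ c ∈ C, c ∈ (S.sp v1 v2).support) ∧
  (∀ v : V, (C ∩ S.ball v (2 * r)).ncard ≤ h')

/-- Adjacency in the `r`-shortcut graph `G(C,r)`. -/
def shortcutAdj (S : Setting V) (C : Set V) (r : ℝ) (v1 v2 : V) : Prop :=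
  v1 ≠ v2 ∧ v1 ∈ C ∧ v2 ∈ C ∧ S.d v1 v2 ≤ r ∧
    ∀ c ∈ C, c ∈ (S.sp v1 v2).support → c = v1 ∨ c = v2

/-- An `(r,η)` path cover, a set of shortest paths represented by their
endpoint pairs. -/
def IsPathCover (S : Setting V) (r : ℝ) (η : ℕ) (P : Set (V × V)) : Prop :=
  (∀ q ∈ P, r / 4 ≤ S.d q.1 q.2 ∧ S.d q.1 q.2 ≤ r) ∧
  (∀ v1 v2 : V, r / 2 ≤ S.d v1 v2 → S.d v1 v2 ≤ r → S.maxedgeLE v1 v2 (r / 8) →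
    ∃ q ∈ P, IsSubwalk (S.sp q.1 q.2) (S.sp v1 v2) ∧
      S.d v1 q.1 ≤ r / 8 ∧ S.d q.2 v2 ≤ r / 8) ∧
  (∀ v : V, {q ∈ P | ∃ x ∈ (S.sp q.1 q.2).support, S.d v x ≤ 4 * r}.ncard ≤ η)

/-- A pair of vertices of `Cm` is *considered* at level `i`. -/
def Considered (S : Setting V) (Cm : Set V) (i : ℤ) (q : V × V) : Prop :=
  q.1 ∈ Cm ∧ q.2 ∈ Cm ∧
    3 / 4 * (8 : ℝ) ^ i ≤ S.d q.1 q.2 ∧ S.d q.1 q.2 ≤ (8 : ℝ) ^ i ∧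
    S.maxedgeLE q.1 q.2 ((8 : ℝ) ^ (i - 1))

/-- `C'` is a valid output of the greedy construction at level `i` from `Cm`. -/
def ValidGreedy (S : Setting V) (Cm : Set V) (i : ℤ) (C' : Set V) : Prop :=
  ∃ (m : ℕ) (q : Fin m → V × V),
    Function.Injective q ∧
    (∀ p : V × V, S.Considered Cm i p ↔ ∃ j : Fin m, q j = p) ∧
    ∃ Sc : Fin (m + 1) → Set V,
      Sc 0 = ∅ ∧ Sc (Fin.last m) = C' ∧
      ∀ j : Fin m,
        ((∃ c ∈ Sc j.castSucc, c ∈ (S.sp (q j).1 (q j).2).support) →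
          Sc j.succ = Sc j.castSucc) ∧
        ((¬ ∃ c ∈ Sc j.castSucc, c ∈ (S.sp (q j).1 (q j).2).support) →
          ∃ c ∈ Cm, c ∈ (S.sp (q j).1 (q j).2).support ∧
            (∀ c' ∈ Cm, c' ∈ (S.sp (q j).1 (q j).2).support →
              |S.d (q j).1 c - S.d (q j).1 (q j).2 / 2| ≤
                |S.d (q j).1 c' - S.d (q j).1 (q j).2 / 2|) ∧
            Sc j.succ = insert c (Sc j.castSucc))

/-- The set of endpoints of edges of weight greater than `t`. -/
def bigEdgeEnds (S : Setting V) (t : ℝ) : Set V :=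
  {x : V | ∃ e ∈ S.G.edgeSet, t < S.w e ∧ x ∈ e}

end Setting


lemma wlen_append {V : Type*} {G : SimpleGraph V} (w : Sym2 V → ℝ) {u v x : V}
    (p : G.Walk u v) (q : G.Walk v x) :
    wlen w (p.append q) = wlen w p + wlen w q := by
  simp [wlen, SimpleGraph.Walk.edges_append]

lemma wlen_reverse {V : Type*} {G : SimpleGraph V} (w : Sym2 V → ℝ) {u v : V}
    (p : G.Walk u v) : wlen w p.reverse = wlen w p := by
  simp [wlen, SimpleGraph.Walk.edges_reverse, List.sum_reverse]

lemma Setting.d_symm {V : Type} [Fintype V] (S : Setting V) (u v : V) :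
    S.d u v = S.d v u := by
  have h : ∀ a b : V, S.d a b ≤ S.d b a := by
    intro a b
    have := S.sp_shortest a b (S.sp b a).reverse
    rwa [wlen_reverse] at this
  exact le_antisymm (h u v) (h v u)

lemma Setting.d_triangle {V : Type} [Fintype V] (S : Setting V) (u v x : V) :
    S.d u x ≤ S.d u v + S.d v x := by
  have := S.sp_shortest u x ((S.sp u v).append (S.sp v x))
  rwa [wlen_append] at this

/-- Ore: a finite graph with no isolated vertices has a dominating set of
size at most half the number of vertices. -/
lemma exists_dominating_half {α : Type} [Fintype α] (G : SimpleGraph α)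
    (hiso : ∀ v : α, ∃ u, G.Adj u v) :
    ∃ D : Set α, (∀ v, v ∈ D ∨ ∃ u ∈ D, G.Adj u v) ∧
      2 * D.ncard ≤ Fintype.card α := by
  classical
  set 𝒟 : Set (Set α) := {D : Set α | ∀ v, v ∈ D ∨ ∃ u ∈ D, G.Adj u v} with h𝒟
  have hne : 𝒟.Nonempty := ⟨Set.univ, fun v => Or.inl (Set.mem_univ v)⟩
  obtain ⟨D, hD, hmin⟩ := Set.exists_min_image 𝒟 Set.ncard (Set.toFinite 𝒟) hne
  have hDdom : ∀ v, v ∈ D ∨ ∃ u ∈ D, G.Adj u v := hD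
  have hcomp : ∀ v, v ∈ Dᶜ ∨ ∃ u ∈ Dᶜ, G.Adj u v := by
    intro v
    by_cases hv : v ∈ D
    · have hnd : ¬ ∀ u, u ∈ D \ {v} ∨ ∃ w ∈ D \ {v}, G.Adj w u := by
        intro h
        have h1 := hmin _ h
        have h2 : (D \ {v}).ncard < D.ncard :=
          Set.ncard_diff_singleton_lt_of_mem hv (Set.toFinite D)
        omega
      push_neg at hnd
      obtain ⟨u, hu1, hu2⟩ := hnd
      rcases hDdom u with hu | ⟨w, hw, hadj⟩
      · have huv : u = v := by
          by_contra h; exact hu1 ⟨hu, h⟩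
        subst huv
        obtain ⟨x, hx⟩ := hiso u
        by_cases hxD : x ∈ D
        · have hxne : x ≠ u := fun h => G.irrefl (h ▸ hx)
          exact absurd hx (hu2 x ⟨hxD, hxne⟩)
        · exact Or.inr ⟨x, hxD, hx⟩
      · have hwv : w = v := by
          by_contra h; exact hu2 w ⟨hw, h⟩ hadj
        subst hwv
        have huD : u ∉ D := by
          intro h
          have hune : u ≠ w := fun he => G.irrefl (he ▸ hadj)
          exact hu1 ⟨h, hune⟩
        exact Or.inr ⟨u, huD, hadj.symm⟩
    · exact Or.inl hv
  have hsum : D.ncard + Dᶜ.ncard = Fintype.card α := by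
    rw [← Set.ncard_union_eq disjoint_compl_right (Set.toFinite D) (Set.toFinite Dᶜ),
      Set.union_compl_self, Set.ncard_univ, Nat.card_eq_fintype_card]
  by_cases hle : D.ncard ≤ Dᶜ.ncard
  · exact ⟨D, hDdom, by omega⟩
  · exact ⟨Dᶜ, hcomp, by omega⟩

/-- From a minimum ball cover `B` of `C` at radius `r` whose
intersection graph is connected with maximum degree `Δ`, one obtains a ball
cover of `C` at radius `8r` of size at most `(Δ/(Δ+1))·|B|`. -/
theorem stmt14 {V : Type} [Fintype V] (S : Setting V) (C : Set V) (r : ℝ)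
    (hr : 0 < r) (B : Set V) (hBC : B ⊆ C)
    (hcover : C ⊆ ⋃ b ∈ B, S.ball b r)
    (hmin : ∀ B2 : Set V, B2 ⊆ C → C ⊆ ⋃ b ∈ B2, S.ball b r → B.ncard ≤ B2.ncard)
    (hB2 : 2 ≤ B.ncard) (Δ : ℕ)
    (hconn : (SimpleGraph.fromRel
      (fun b b' : ↥B => S.d (b : V) (b' : V) ≤ 3 * r)).Connected)
    (hdeg : ∀ b : ↥B,
      ((SimpleGraph.fromRel
        (fun b b' : ↥B => S.d (b : V) (b' : V) ≤ 3 * r)).neighborSet b).ncard ≤ Δ) :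
    (∃ B' : Set V, B' ⊆ B ∧ (B'.ncard : ℝ) ≤ (Δ : ℝ) / (Δ + 1) * B.ncard ∧
        C ⊆ ⋃ b ∈ B', S.ball b (8 * r)) ∧
    (∃ B'' : Set V, B'' ⊆ C ∧ (B''.ncard : ℝ) ≤ (Δ : ℝ) / (Δ + 1) * B.ncard ∧
        C ⊆ ⋃ b ∈ B'', S.ball b (8 * r)) := by
  classical
  haveI : Fintype ↥B := (Set.toFinite B).fintype
  set IG : SimpleGraph ↥B :=
    SimpleGraph.fromRel (fun b b' : ↥B => S.d (b : V) (b' : V) ≤ 3 * r) with hIG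
  have hcardB : Fintype.card ↥B = B.ncard := by
    rw [← Nat.card_eq_fintype_card, Nat.card_coe_set_eq]
  have hiso : ∀ v : ↥B, ∃ u, IG.Adj u v := by
    intro v
    obtain ⟨u, hu⟩ := Fintype.exists_ne_of_one_lt_card (by omega) v
    obtain ⟨p⟩ := hconn.preconnected v u
    cases p with
    | nil => exact absurd rfl hu
    | cons h q => exact ⟨_, h.symm⟩
  obtain ⟨D, hDdom, hDcard⟩ := exists_dominating_half IG hiso
  have hΔ1 : 1 ≤ Δ := by
    have hpos : 0 < Fintype.card ↥B := by omega
    obtain ⟨v0⟩ := Fintype.card_pos_iff.mp hpos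
    obtain ⟨u0, hu0⟩ := hiso v0
    have : 0 < (IG.neighborSet v0).ncard := by
      rw [Set.ncard_pos (Set.toFinite _)]
      exact ⟨u0, hu0.symm⟩
    have := hdeg v0
    omega
  set B' : Set V := Subtype.val '' D with hB'
  have hB'B : B' ⊆ B := by
    rintro _ ⟨b, _, rfl⟩; exact b.2
  have hB'card : B'.ncard = D.ncard :=
    Set.ncard_image_of_injective D Subtype.val_injective
  have hbound : (B'.ncard : ℝ) ≤ (Δ : ℝ) / (Δ + 1) * B.ncard := by
    have h1 : (2 : ℝ) * B'.ncard ≤ B.ncard := by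
      rw [hB'card]
      exact_mod_cast hcardB ▸ hDcard
    have hΔR : (1 : ℝ) ≤ Δ := by exact_mod_cast hΔ1
    have hn0 : (0 : ℝ) ≤ B.ncard := Nat.cast_nonneg _
    rw [div_mul_eq_mul_div, le_div_iff₀ (by positivity)]
    nlinarith [mul_nonneg (sub_nonneg.mpr hΔR) hn0]
  have hcov : C ⊆ ⋃ b ∈ B', S.ball b (8 * r) := by
    intro c hc
    obtain ⟨b, hbB, hbc⟩ := Set.mem_iUnion₂.mp (hcover hc)
    have hbc' : S.d b c ≤ r := hbc
    rcases hDdom ⟨b, hbB⟩ with hin | ⟨u, huD, hadj⟩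
    · refine Set.mem_iUnion₂.mpr ⟨b, ⟨⟨b, hbB⟩, hin, rfl⟩, ?_⟩
      show S.d b c ≤ 8 * r
      linarith
    · rw [hIG, SimpleGraph.fromRel_adj] at hadj
      have hub : S.d (u : V) b ≤ 3 * r := by
        rcases hadj.2 with h | h
        · exact h
        · rw [S.d_symm]; exact h
      refine Set.mem_iUnion₂.mpr ⟨(u : V), ⟨u, huD, rfl⟩, ?_⟩
      show S.d (u : V) c ≤ 8 * r
      have := S.d_triangle (u : V) b c
      linarith
  refine ⟨⟨B', hB'B, hbound, hcov⟩, ⟨B', hB'B.trans hBC, hbound, hcov⟩⟩
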